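/- Let τ be an ergodic invertible measure-preserving transformation of a standard probability space, 1 ≤ r ≤ ∞. The set of f ∈ L^r(X) that are τ-coboundaries with a measurable transfer function is of first category in L^r(X); i.e., the generic f ∈ L^r(X) is not of the form h - h∘τ for any measurable h. -/

import Mathlib

open MeasureTheory ENNReal Filter Topology

set_option synthInstance.maxHeartbeats 1000000
set_option maxHeartbeats 1000000

section Stmt16Aux

variable {X : Type*} [MeasurableSpace X] {μ : Measure X} {τ : X → X}

private lemma stmt16_bs_congr (hτ : MeasurePreserving τ μ μ) {f g : X → ℝ}
    (h : f =ᵐ[μ] g) (n : ℕ) : birkhoffSum τ f n =ᵐ[μ] birkhoffSum τ g n := by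
  have H : ∀ᵐ x ∂μ, ∀ k : ℕ, f (τ^[k] x) = g (τ^[k] x) := by
    rw [ae_all_iff]
    intro k
    exact (hτ.iterate k).quasiMeasurePreserving.ae_eq_comp h
  filter_upwards [H] with x hx
  exact Finset.sum_congr rfl fun k _ => hx k

private lemma stmt16_bs_meas (hτm : Measurable τ) {f : X → ℝ} (hf : Measurable f) (n : ℕ) :
    Measurable (birkhoffSum τ f n) :=
  Finset.measurable_sum _ fun k _ => hf.comp (hτm.iterate k)

variable (μ τ) in
/-- The Schmidt sets: functions whose Birkhoff sums are `≤ A` on a set of measure `≥ 1/2`. -/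
private def stmt16C (r : ℝ≥0∞) (A : ℕ) : Set (Lp ℝ r μ) :=
  {f | ∀ n : ℕ, 1/2 ≤ μ {x | |birkhoffSum τ (⇑f) n x| ≤ (A : ℝ)}}

private lemma stmt16C_closed [IsFiniteMeasure μ] (hτ : MeasurePreserving τ μ μ)
    (r : ℝ≥0∞) [Fact (1 ≤ r)] (A : ℕ) : IsClosed (stmt16C μ τ r A) := by
  refine IsSeqClosed.isClosed ?_
  intro g f hg hconv
  obtain ⟨ns, -, hae⟩ := (tendstoInMeasure_of_tendsto_Lp hconv).exists_seq_tendsto_ae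
  intro n
  have hae' : ∀ᵐ x ∂μ, Tendsto (fun j => birkhoffSum τ (⇑(g (ns j))) n x) atTop
      (𝓝 (birkhoffSum τ (⇑f) n x)) := by
    have H : ∀ᵐ x ∂μ, ∀ k : ℕ,
        Tendsto (fun j => (⇑(g (ns j)) (τ^[k] x))) atTop (𝓝 (⇑f (τ^[k] x))) := by
      rw [ae_all_iff]
      intro k
      exact (hτ.iterate k).quasiMeasurePreserving.ae hae
    filter_upwards [H] with x hx
    exact tendsto_finset_sum _ fun k _ => hx k
  set E : ℕ → Set X := fun j => {x | |birkhoffSum τ (⇑(g (ns j))) n x| ≤ (A : ℝ)} with hE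
  have hEm : ∀ j, MeasurableSet (E j) := fun j =>
    measurableSet_le (stmt16_bs_meas hτ.measurable (Lp.stronglyMeasurable _).measurable n).abs
      measurable_const
  have hEhalf : ∀ j, 1/2 ≤ μ (E j) := fun j => hg (ns j) n
  set G : ℕ → Set X := fun m => ⋃ j, E (m + j) with hG
  have hGm : ∀ m, MeasurableSet (G m) := fun m => MeasurableSet.iUnion fun j => hEm _
  have hGanti : Antitone G := by
    intro a b hab
    refine Set.iUnion_subset fun j => ?_
    have hbj : b + j = a + (b - a + j) := by omega
    rw [hbj]
    exact Set.subset_iUnion (fun i => E (a + i)) (b - a + j)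
  have hGhalf : ∀ m, 1/2 ≤ μ (G m) := fun m =>
    le_trans (hEhalf m) (measure_mono (by simpa using Set.subset_iUnion (fun j => E (m + j)) 0))
  have hlim : Tendsto (μ ∘ G) atTop (𝓝 (μ (⋂ m, G m))) :=
    tendsto_measure_iInter_atTop (fun m => (hGm m).nullMeasurableSet) hGanti
      ⟨0, measure_ne_top μ _⟩
  have h12 : 1/2 ≤ μ (⋂ m, G m) := ge_of_tendsto' hlim hGhalf
  refine le_trans h12 (measure_mono_ae ?_)
  filter_upwards [hae'] with x hx hxG
  have hfreq : ∃ᶠ j in atTop, |birkhoffSum τ (⇑(g (ns j))) n x| ≤ (A : ℝ) := by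
    rw [frequently_atTop]
    intro m
    obtain ⟨j, hj⟩ := Set.mem_iUnion.mp (Set.mem_iInter.mp hxG m)
    exact ⟨m + j, Nat.le_add_right m j, hj⟩
  exact isClosed_Iic.mem_of_frequently_of_tendsto (by simpa using hfreq) hx.abs

private lemma stmt16C_interior [IsProbabilityMeasure μ] (hτ : MeasurePreserving τ μ μ)
    (r : ℝ≥0∞) [Fact (1 ≤ r)] (A : ℕ) : interior (stmt16C μ τ r A) = ∅ := by
  rw [Set.eq_empty_iff_forall_notMem]
  intro f hf
  obtain ⟨ε, hε, hball⟩ := Metric.mem_nhds_iff.mp (mem_interior_iff_mem_nhds.mp hf)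
  obtain ⟨n, hn⟩ := exists_nat_gt ((2 * A + 1) / (ε / 4))
  have hε4 : (0:ℝ) < ε / 4 := by positivity
  have hn' : 2 * (A : ℝ) + 1 < n * (ε / 4) := by
    rw [div_lt_iff₀ hε4] at hn; linarith
  set c : Fin 3 → ℝ := fun i => ((i : ℕ) + 1) * (ε / 4) with hc
  have hr0 : r ≠ 0 := by have : (1:ℝ≥0∞) ≤ r := Fact.out; positivity
  have hnorm : ∀ i, ‖Lp.const r μ (c i)‖ = |c i| := by
    intro i
    rw [Lp.norm_def, eLpNorm_congr_ae (Lp.coeFn_const r μ (c i))]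
    have : eLpNorm (Function.const X (c i)) r μ = ‖c i‖₊ := by
      rw [show (Function.const X (c i)) = fun _ => c i from rfl,
        eLpNorm_const (c i) hr0 (IsProbabilityMeasure.ne_zero μ)]
      simp
      exact enorm_eq_nnnorm _
    rw [this]
    simp [Real.norm_eq_abs]
  have hmem : ∀ i, (f + Lp.const r μ (c i)) ∈ stmt16C μ τ r A := by
    intro i
    apply hball
    rw [Metric.mem_ball, dist_eq_norm]
    have : f + Lp.const r μ (c i) - f = Lp.const r μ (c i) := by abel
    rw [this, hnorm]
    have hci : c i = ((i : ℕ) + 1) * (ε / 4) := rfl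
    have hile : ((i : ℕ) : ℝ) ≤ 2 := by
      have := i.2
      exact_mod_cast Nat.lt_succ_iff.mp this
    rw [hci, abs_of_pos (by positivity)]
    nlinarith
  set T : Fin 3 → Set X := fun i => {x | |birkhoffSum τ (⇑f) n x + n * c i| ≤ (A : ℝ)} with hT
  have hTm : ∀ i, MeasurableSet (T i) := fun i =>
    measurableSet_le
      (((stmt16_bs_meas hτ.measurable (Lp.stronglyMeasurable f).measurable n).add_const _).abs)
      measurable_const
  have hThalf : ∀ i, 1/2 ≤ μ (T i) := by
    intro i
    have h1 := hmem i n
    refine le_trans h1 (le_of_eq (measure_congr ?_))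
    have hcoe : ⇑(f + Lp.const r μ (c i)) =ᵐ[μ] fun x => ⇑f x + c i := by
      filter_upwards [Lp.coeFn_add f (Lp.const r μ (c i)), Lp.coeFn_const r μ (c i)] with x h1 h2
      rw [h1, Pi.add_apply, h2]
      rfl
    filter_upwards [stmt16_bs_congr hτ hcoe n] with x hx
    have hbs : birkhoffSum τ (fun y => ⇑f y + c i) n x
        = birkhoffSum τ (⇑f) n x + n * c i := by
      simp [birkhoffSum, Finset.sum_add_distrib]
    show (|birkhoffSum τ (⇑(f + Lp.const r μ (c i))) n x| ≤ (A:ℝ))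
        = (|birkhoffSum τ (⇑f) n x + n * c i| ≤ (A:ℝ))
    rw [hx, hbs]
  have hdisj : ∀ i j : Fin 3, i ≠ j → Disjoint (T i) (T j) := by
    intro i j hij
    rw [Set.disjoint_left]
    intro x hxi hxj
    have h1 : |birkhoffSum τ (⇑f) n x + n * c i| ≤ (A : ℝ) := hxi
    have h2 : |birkhoffSum τ (⇑f) n x + n * c j| ≤ (A : ℝ) := hxj
    have hsep : ε / 4 ≤ |c i - c j| := by
      have hne : ((i : ℕ) : ℝ) ≠ ((j : ℕ) : ℝ) := by
        exact_mod_cast fun h => hij (Fin.ext h)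
      have hone : 1 ≤ |((i : ℕ) : ℝ) - ((j : ℕ) : ℝ)| := by
        rcases lt_or_gt_of_ne hne with h | h
        · rw [abs_sub_comm, abs_of_pos (sub_pos.mpr h)]
          have : (i : ℕ) + 1 ≤ (j : ℕ) := by exact_mod_cast h
          have : ((i : ℕ) : ℝ) + 1 ≤ ((j : ℕ) : ℝ) := by exact_mod_cast this
          linarith
        · rw [abs_of_pos (sub_pos.mpr h)]
          have : (j : ℕ) + 1 ≤ (i : ℕ) := by exact_mod_cast h
          have : ((j : ℕ) : ℝ) + 1 ≤ ((i : ℕ) : ℝ) := by exact_mod_cast this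
          linarith
      have : c i - c j = (((i : ℕ) : ℝ) - ((j : ℕ) : ℝ)) * (ε / 4) := by
        simp only [hc]; ring
      rw [this, abs_mul, abs_of_pos hε4]
      nlinarith
    have habs : |(birkhoffSum τ (⇑f) n x + n * c i)
        - (birkhoffSum τ (⇑f) n x + n * c j)| ≤ 2 * A := by
      calc |(birkhoffSum τ (⇑f) n x + n * c i) - (birkhoffSum τ (⇑f) n x + n * c j)|
          ≤ |birkhoffSum τ (⇑f) n x + n * c i| + |birkhoffSum τ (⇑f) n x + n * c j| :=
            abs_sub _ _
        _ ≤ 2 * A := by linarith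
    have : (birkhoffSum τ (⇑f) n x + n * c i) - (birkhoffSum τ (⇑f) n x + n * c j)
        = n * (c i - c j) := by ring
    rw [this, abs_mul, abs_of_nonneg (by positivity : (0:ℝ) ≤ (n:ℝ))] at habs
    have hn1 : (1:ℝ) ≤ n := by
      have : (0:ℝ) < n := by nlinarith
      exact_mod_cast Nat.one_le_iff_ne_zero.mpr (by exact_mod_cast this.ne')
    nlinarith [mul_le_mul_of_nonneg_left hsep (by positivity : (0:ℝ) ≤ (n:ℝ))]
  have hsum : (1:ℝ≥0∞) + 1/2 ≤ 1 := by
    have e1 : μ (T 0 ∪ T 1) = μ (T 0) + μ (T 1) :=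
      measure_union (hdisj 0 1 (by decide)) (hTm 1)
    have e2 : μ (T 0 ∪ T 1 ∪ T 2) = μ (T 0 ∪ T 1) + μ (T 2) := by
      refine measure_union ?_ (hTm 2)
      rw [Set.disjoint_union_left]
      exact ⟨hdisj 0 2 (by decide), hdisj 1 2 (by decide)⟩
    have hstep : μ (T 0) + μ (T 1) + μ (T 2) = μ (T 0 ∪ T 1 ∪ T 2) := by
      rw [e2, e1]
    have hle : μ (T 0 ∪ T 1 ∪ T 2) ≤ 1 :=
      le_trans (measure_mono (Set.subset_univ _)) (le_of_eq measure_univ)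
    calc (1:ℝ≥0∞) + 1/2 = 1/2 + 1/2 + 1/2 := by rw [ENNReal.add_halves]
      _ ≤ μ (T 0) + μ (T 1) + μ (T 2) :=
        add_le_add (add_le_add (hThalf 0) (hThalf 1)) (hThalf 2)
      _ = μ (T 0 ∪ T 1 ∪ T 2) := hstep
      _ ≤ 1 := hle
  exact absurd hsum (ENNReal.lt_add_right one_ne_top (by norm_num)).not_ge

private lemma stmt16C_contain [IsProbabilityMeasure μ] (hτ : MeasurePreserving τ μ μ)
    (r : ℝ≥0∞) [Fact (1 ≤ r)] {f : Lp ℝ r μ} {h : X → ℝ} (hm : Measurable h)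
    (hfe : ∀ᵐ x ∂μ, ⇑f x = h x - h (τ x)) : ∃ A : ℕ, f ∈ stmt16C μ τ r A := by
  -- choose m with μ {|h| > m} < 1/4
  have hanti : Antitone (fun m : ℕ => {x | (m : ℝ) < |h x|}) := by
    intro a b hab x hx
    simp only [Set.mem_setOf_eq] at hx ⊢
    exact lt_of_le_of_lt (by exact_mod_cast hab) hx
  have hempty : (⋂ m : ℕ, {x | (m : ℝ) < |h x|}) = ∅ := by
    ext x
    simp only [Set.mem_iInter, Set.mem_setOf_eq, Set.mem_empty_iff_false, iff_false, not_forall,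
      not_lt]
    exact exists_nat_ge |h x|
  have hlim : Tendsto (fun m : ℕ => μ {x | (m : ℝ) < |h x|}) atTop (𝓝 0) := by
    have := tendsto_measure_iInter_atTop
      (fun m => (measurableSet_lt measurable_const hm.abs).nullMeasurableSet) hanti
      ⟨0, measure_ne_top μ _⟩
    rw [hempty, measure_empty] at this
    exact this
  have hev : ∀ᶠ m : ℕ in atTop, μ {x | (m : ℝ) < |h x|} < 1/4 :=
    hlim.eventually_lt_const (by norm_num)
  obtain ⟨m, hμm⟩ := hev.exists
  refine ⟨2 * m + 1, fun n => ?_⟩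
  have hbs : birkhoffSum τ (⇑f) n =ᵐ[μ] fun x => h x - h (τ^[n] x) := by
    refine (stmt16_bs_congr hτ hfe n).trans (Eventually.of_forall fun x => ?_)
    have hterm : birkhoffSum τ (fun y => h y - h (τ y)) n x
        = ∑ k ∈ Finset.range n, ((fun k => h (τ^[k] x)) k - (fun k => h (τ^[k] x)) (k + 1)) := by
      refine Finset.sum_congr rfl fun k _ => ?_
      simp [Function.iterate_succ_apply']
    rw [hterm, Finset.sum_range_sub']
    simp
  set good : Set X := {x | |h x| ≤ (m : ℝ)} ∩ τ^[n] ⁻¹' {x | |h x| ≤ (m : ℝ)} with hgood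
  have hsetm : MeasurableSet {x | |h x| ≤ (m : ℝ)} :=
    measurableSet_le hm.abs measurable_const
  have hgoodm : MeasurableSet good :=
    hsetm.inter ((hτ.iterate n).measurable hsetm)
  have hsub : ∀ᵐ x ∂μ, x ∈ good → x ∈ {x | |birkhoffSum τ (⇑f) n x| ≤ ((2 * m + 1 : ℕ) : ℝ)} := by
    filter_upwards [hbs] with x hx hxg
    obtain ⟨h1, h2⟩ := hxg
    simp only [Set.mem_preimage, Set.mem_setOf_eq] at h1 h2 ⊢
    rw [hx]
    have := abs_sub (h x) (h (τ^[n] x))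
    push_cast
    linarith
  have hcompl : μ goodᶜ ≤ 1/2 := by
    have hsubc : goodᶜ ⊆ {x | (m : ℝ) < |h x|} ∪ τ^[n] ⁻¹' {x | (m : ℝ) < |h x|} := by
      intro x hx
      rw [hgood, Set.compl_inter] at hx
      rcases hx with hx | hx
      · left; simpa [not_le] using hx
      · right; simpa [not_le] using hx
    have hpre : μ (τ^[n] ⁻¹' {x | (m : ℝ) < |h x|}) = μ {x | (m : ℝ) < |h x|} :=
      (hτ.iterate n).measure_preimage
        (measurableSet_lt measurable_const hm.abs).nullMeasurableSet
    calc μ goodᶜ ≤ μ ({x | (m : ℝ) < |h x|} ∪ τ^[n] ⁻¹' {x | (m : ℝ) < |h x|}) :=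
          measure_mono hsubc
      _ ≤ μ {x | (m : ℝ) < |h x|} + μ (τ^[n] ⁻¹' {x | (m : ℝ) < |h x|}) := measure_union_le _ _
      _ ≤ 1/4 + 1/4 := by rw [hpre]; exact add_le_add hμm.le hμm.le
      _ = 1/2 := by
          rw [ENNReal.div_add_div_same]
          rw [ENNReal.div_eq_div_iff] <;> norm_num
  have hgood2 : 1/2 ≤ μ good := by
    have htotal : μ good + μ goodᶜ = 1 := by
      rw [measure_add_measure_compl hgoodm, measure_univ]
    have : (1:ℝ≥0∞) - 1/2 ≤ μ good := by
      rw [tsub_le_iff_right]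
      calc (1:ℝ≥0∞) = μ good + μ goodᶜ := htotal.symm
        _ ≤ μ good + 1/2 := add_le_add_right hcompl _
    simpa [ENNReal.sub_half] using this
  exact le_trans hgood2 (measure_mono_ae hsub)

end Stmt16Aux

/-- For an ergodic invertible measure-preserving τ on a standard
probability space and 1 ≤ r ≤ ∞, the set of f ∈ L^r that are τ-coboundaries with a
measurable transfer function is meagre (first category) in L^r. -/
theorem stmt16 {X : Type*} [MeasurableSpace X] [StandardBorelSpace X]
    (μ : Measure X) [IsProbabilityMeasure μ] [NullSingletonClass μ]
    (τ τi : X → X) (hτ : MeasurePreserving τ μ μ) (hτi : MeasurePreserving τi μ μ)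
    (hinv : ∀ x, τi (τ x) = x ∧ τ (τi x) = x)
    (herg : Ergodic τ μ)
    (r : ℝ≥0∞) [Fact (1 ≤ r)] :
    IsMeagre {f : Lp ℝ r μ | ∃ h : X → ℝ, Measurable h ∧
      ∀ᵐ x ∂μ, (f : X → ℝ) x = h x - h (τ x)} := by
  have hsub : {f : Lp ℝ r μ | ∃ h : X → ℝ, Measurable h ∧
      ∀ᵐ x ∂μ, (f : X → ℝ) x = h x - h (τ x)} ⊆ ⋃ A : ℕ, stmt16C μ τ r A := by
    rintro f ⟨h, hm, hfe⟩
    exact Set.mem_iUnion.mpr (stmt16C_contain hτ r hm hfe)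
  refine (isMeagre_iUnion fun A => ?_).mono hsub
  have hc := stmt16C_closed hτ r A
  have hi := stmt16C_interior hτ r A
  rw [IsMeagre]
  exact residual_of_dense_open hc.isOpen_compl (interior_eq_empty_iff_dense_compl.mp hi)
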